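/- Unique extension of the Lyapunov eigenvector to a non-irreducible block system: Let V₁, V₂ be finite nonempty index sets and let A be the real matrix indexed by V₁ ⊕ V₂ given in block form by Matrix.fromBlocks A₁ 0 K A₂ (so A has upper-left block A₁, upper-right block 0, lower-left block K, lower-right block A₂). Let λ be a real number such that A₁.mulVec v₁ = λ • v₁ for a given vector v₁ : V₁ → ℝ, and such that every complex eigenvalue of A₂ has real part strictly less than λ. Then λ·1 − A₂ is invertible, and v₂ := (λ·1 − A₂)⁻¹.mulVec (K.mulVec v₁) is the unique vector v₂ : V₂ → ℝ such that A.mulVec (Sum.elim v₁ v₂) = λ • Sum.elim v₁ v₂. -/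
import Mathlib


/-- A complex number `μ` is an eigenvalue of the real matrix `M`
(via its complexification). -/
def Matrix.IsComplexEigenvalue {V : Type*} [Fintype V] (M : Matrix V V ℝ) (μ : ℂ) : Prop :=
  ∃ v : V → ℂ, v ≠ 0 ∧ (M.map (Complex.ofReal)).mulVec v = μ • v

/-- **Unique extension of the Lyapunov eigenvector to a non-irreducible block
system.** If `A₁ v₁ = λ v₁` and every complex eigenvalue of `A₂` has real part
strictly less than `λ`, then `λ·1 − A₂` is invertible and
`v₂ = (λ·1 − A₂)⁻¹ K v₁` is the unique vector making `Sum.elim v₁ v₂` an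
eigenvector of the block matrix `fromBlocks A₁ 0 K A₂` with eigenvalue `λ`. -/
theorem block_lyapunov_extension {V₁ V₂ : Type*}
    [Fintype V₁] [Fintype V₂] [DecidableEq V₁] [DecidableEq V₂]
    [Nonempty V₁] [Nonempty V₂]
    (A₁ : Matrix V₁ V₁ ℝ) (A₂ : Matrix V₂ V₂ ℝ) (K : Matrix V₂ V₁ ℝ)
    (lam : ℝ) (v₁ : V₁ → ℝ)
    (h₁ : A₁.mulVec v₁ = lam • v₁)
    (h₂ : ∀ μ : ℂ, A₂.IsComplexEigenvalue μ → μ.re < lam) :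
    IsUnit (lam • (1 : Matrix V₂ V₂ ℝ) - A₂).det ∧
    ∀ v₂ : V₂ → ℝ,
      (Matrix.fromBlocks A₁ 0 K A₂).mulVec (Sum.elim v₁ v₂) = lam • Sum.elim v₁ v₂ ↔
        v₂ = (lam • (1 : Matrix V₂ V₂ ℝ) - A₂)⁻¹.mulVec (K.mulVec v₁) := by
  set M : Matrix V₂ V₂ ℝ := lam • (1 : Matrix V₂ V₂ ℝ) - A₂ with hM
  have hdet : IsUnit M.det := by
    rw [isUnit_iff_ne_zero]
    intro h0
    obtain ⟨v, hv, hmv⟩ := (Matrix.exists_mulVec_eq_zero_iff).mpr h0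
    have hA : A₂.mulVec v = lam • v := by
      have h := hmv
      rw [hM, Matrix.sub_mulVec, Matrix.smul_mulVec, Matrix.one_mulVec,
        sub_eq_zero] at h
      exact h.symm
    have heig : A₂.IsComplexEigenvalue lam := by
      refine ⟨fun i => (v i : ℂ), ?_, ?_⟩
      · intro h
        apply hv
        funext i
        have := congrFun h i
        simp only [Pi.zero_apply] at this
        exact_mod_cast this
      · funext i
        have := congrFun hA i
        simp only [Matrix.mulVec, Matrix.map_apply, dotProduct, Pi.smul_apply,
          smul_eq_mul] at this ⊢
        exact_mod_cast congrArg (Complex.ofReal) this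
    have := h₂ lam heig
    simp at this
  refine ⟨hdet, fun v₂ => ?_⟩
  have key : ∀ v₂ : V₂ → ℝ,
      ((Matrix.fromBlocks A₁ 0 K A₂).mulVec (Sum.elim v₁ v₂) = lam • Sum.elim v₁ v₂) ↔
      M.mulVec v₂ = K.mulVec v₁ := by
    intro v₂
    constructor
    · intro h
      have h2 := congrFun h
      have : K.mulVec v₁ + A₂.mulVec v₂ = lam • v₂ := by
        funext i
        have := h2 (Sum.inr i)
        simpa [Matrix.fromBlocks_mulVec] using this
      rw [hM, Matrix.sub_mulVec, Matrix.smul_mulVec, Matrix.one_mulVec]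
      rw [← this]; abel
    · intro h
      have hb : K.mulVec v₁ + A₂.mulVec v₂ = lam • v₂ := by
        rw [hM, Matrix.sub_mulVec, Matrix.smul_mulVec, Matrix.one_mulVec] at h
        rw [← h]; abel
      funext i
      cases i with
      | inl i => simpa [Matrix.fromBlocks_mulVec] using congrFun h₁ i
      | inr i => simpa [Matrix.fromBlocks_mulVec] using congrFun hb i
  rw [key]
  constructor
  · intro h
    rw [← h, Matrix.mulVec_mulVec, Matrix.nonsing_inv_mul M hdet, Matrix.one_mulVec]
  · intro h
    rw [h, Matrix.mulVec_mulVec, Matrix.mul_nonsing_inv M hdet, Matrix.one_mulVec]
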